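/- arXiv:2305.03120 — 4 statements merged into one kernel-verified Lean document; each statement's English description precedes it below -/
import Mathlib

section
/- Let V be a monoidal category with very flat monoidal product admitting small products. Then for any two small families (A_i)_{i∈I} and (B_j)_{j∈J} of objects in V, the canonical morphism ι : (∏_{i∈I} A_i) ⊗ (∏_{j∈J} B_j) ⟶ ∏_{(i,j)∈I×J} (A_i ⊗ B_j), determined by π_{i,j} ∘ ι = π_i ⊗ π_j for all i ∈ I and j ∈ J (where π_i, π_j and π_{i,j} denote the canonical product projections), is a monomorphism. -/
open CategoryTheory Category MonoidalCategory Limits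

universe w v u

/-- A family of morphisms `(f i : X ⟶ Y i)` is jointly monic if any parallel pair
equalized by all members of the family is equal. -/
def JointlyMonic {V : Type u} [Category.{v} V] {ι : Type w} {X : V} {Y : ι → V}
    (f : ∀ i, X ⟶ Y i) : Prop :=
  ∀ ⦃W : V⦄ (g h : W ⟶ X), (∀ i, g ≫ f i = h ≫ f i) → g = h

/-- An object `A` is very flat if both endofunctors `- ⊗ A` and `A ⊗ -`
preserve jointly monic families. -/
def VeryFlat {V : Type u} [Category.{v} V] [MonoidalCategory V] (A : V) : Prop :=
  (∀ {ι : Type w} {B : V} {Bi : ι → V} (β : ∀ i, B ⟶ Bi i),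
    JointlyMonic β → JointlyMonic (fun i => β i ⊗ₘ 𝟙 A)) ∧
  (∀ {ι : Type w} {B : V} {Bi : ι → V} (β : ∀ i, B ⟶ Bi i),
    JointlyMonic β → JointlyMonic (fun i => 𝟙 A ⊗ₘ β i))

/-- in a monoidal category with very flat monoidal product and small
products, for any two small families `(A i)` and `(B j)` the canonical morphism
`(∏ᶜ A) ⊗ (∏ᶜ B) ⟶ ∏ᶜ (A i ⊗ B j)` (determined by `π_{i,j} ∘ ι = π_i ⊗ π_j`)
is a monomorphism. -/
theorem mono_tensor_prodComparison
    {V : Type u} [Category.{v} V] [MonoidalCategory V] [HasProducts.{v} V]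
    (hV : ∀ A : V, VeryFlat.{v} A)
    {I J : Type v} (A : I → V) (B : J → V) :
    Mono (Pi.lift (fun p : I × J => Pi.π A p.1 ⊗ₘ Pi.π B p.2) :
      (∏ᶜ A) ⊗ (∏ᶜ B) ⟶ ∏ᶜ (fun p : I × J => A p.1 ⊗ B p.2)) := by
  have hπA : JointlyMonic (Pi.π A) := fun W g h hg => Pi.hom_ext g h hg
  have hπB : JointlyMonic (Pi.π B) := fun W g h hg => Pi.hom_ext g h hg
  have h1 : JointlyMonic (fun i => Pi.π A i ⊗ₘ 𝟙 (∏ᶜ B)) := (hV _).1 _ hπA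
  have h2 : ∀ i, JointlyMonic (fun j => 𝟙 (A i) ⊗ₘ Pi.π B j) := fun i => (hV _).2 _ hπB
  constructor
  intro W g h hgh
  have key : ∀ p : I × J,
      g ≫ (Pi.π A p.1 ⊗ₘ Pi.π B p.2) = h ≫ (Pi.π A p.1 ⊗ₘ Pi.π B p.2) := by
    intro p
    have := congrArg (· ≫ Pi.π (fun p : I × J => A p.1 ⊗ B p.2) p) hgh
    simpa using this
  apply h1 g h
  intro i
  apply h2 i
  intro j
  have := key (i, j)
  simp only [assoc, tensorHom_comp_tensorHom, comp_id, id_comp] at this ⊢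
  exact this
end

section
/- Let V be a monoidal category with very flat monoidal product admitting countable products, W an object of V, and P = ∏_{k∈ℕ} W^{⊗k} with projections π_k : P ⟶ W^{⊗k}. Let c : C ⟶ P be a monomorphism and Δ : C ⟶ C ⊗ C a morphism such that for all k, l ∈ ℕ the composite (π_k ⊗ π_l) ∘ (c ⊗ c) ∘ Δ equals the composite of π_{k+l} ∘ c with the canonical coherence isomorphism W^{⊗(k+l)} ≅ W^{⊗k} ⊗ W^{⊗l}. Then Δ is coassociative and counital with counit ε = π_0 ∘ c : C ⟶ W^{⊗0} = 𝟙_V; that is, (C, Δ, π_0 ∘ c) is a comonoid in V. -/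
open CategoryTheory Category MonoidalCategory Limits Opposite

universe w v u

/-- A small category is `κ`-filtered if every diagram indexed by a category with fewer than
`κ` morphisms admits a cocone. -/
def IsCardinalFilteredCategory (J : Type v) [SmallCategory J] (κ : Cardinal.{v}) : Prop :=
  ∀ (K : Type v) [SmallCategory K],
    Cardinal.mk (Σ (a : K) (b : K), a ⟶ b) < κ →
      ∀ F : K ⥤ J, Nonempty (Limits.Cocone F)

/-- A category is locally presentable if it is cocomplete and there is a regular cardinal `κ`
and a (small) set `S` of objects whose representable functors preserve `κ`-filtered colimits,
such that every object is a `κ`-filtered colimit of objects of `S`. -/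
def IsLocallyPresentable (V : Type u) [Category.{v} V] : Prop :=
  HasColimitsOfSize.{v, v} V ∧
  ∃ (κ : Cardinal.{v}), κ.IsRegular ∧
    ∃ (ι : Type v) (S : ι → V),
      (∀ (i : ι) (J : Type v) [SmallCategory J], IsCardinalFilteredCategory J κ →
        Nonempty (PreservesColimitsOfShape J (coyoneda.obj (op (S i))))) ∧
      (∀ X : V, ∃ (J : Type v) (_ : SmallCategory J) (F : J ⥤ V) (cc : Limits.Cocone F),
        IsCardinalFilteredCategory J κ ∧ (∀ j, ∃ i, F.obj j = S i) ∧
        Nonempty (Limits.IsColimit cc) ∧ Nonempty (cc.pt ≅ X))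

variable {V : Type u} [Category.{v} V] [MonoidalCategory V]

/-- Tensor powers: `W^{⊗0} = 𝟙_V` and `W^{⊗(n+1)} = W^{⊗n} ⊗ W`. -/
def tpow (W : V) : ℕ → V
  | 0 => 𝟙_ V
  | n + 1 => tpow W n ⊗ W

/-- The canonical coherence isomorphism `W^{⊗(k+l)} ≅ W^{⊗k} ⊗ W^{⊗l}`. -/
def tpowAdd (W : V) : ∀ k l : ℕ, tpow W (k + l) ≅ tpow W k ⊗ tpow W l
  | _, 0 => (ρ_ _).symm
  | k, l + 1 => whiskerRightIso (tpowAdd W k l) W ≪≫ α_ _ _ _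


section AuxComonoid

variable (W : V)

lemma tpow_eqToHom_succ {a b : ℕ} (h : a = b) :
    (eqToHom (show tpow W (a+1) = tpow W (b+1) by rw [h]) : tpow W (a+1) ⟶ tpow W (b+1)) =
      (eqToHom (show tpow W a = tpow W b by rw [h])) ▷ W := by
  subst h; simp; rfl

lemma tpowAdd_zero_left (l : ℕ) :
    (tpowAdd W 0 l).hom =
      eqToHom (show tpow W (0+l) = tpow W l by rw [Nat.zero_add]) ≫ (λ_ (tpow W l)).inv := by
  induction l with
  | zero => simp [tpowAdd, tpow]; exact (unitors_inv_equal (C := V)).symm.trans (id_comp _).symm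
  | succ l ih =>
    show ((tpowAdd W 0 l).hom ▷ W) ≫ (α_ _ _ _).hom = _
    rw [ih, tpow_eqToHom_succ W (Nat.zero_add l)]
    simp only [tpow]
    coherence

lemma tpowAdd_assoc (k l m : ℕ) :
    (tpowAdd W (k+l) m).hom ≫ ((tpowAdd W k l).hom ▷ tpow W m) ≫ (α_ _ _ _).hom =
      eqToHom (show tpow W (k+l+m) = tpow W (k+(l+m)) by rw [Nat.add_assoc]) ≫
        (tpowAdd W k (l+m)).hom ≫ (tpow W k ◁ (tpowAdd W l m).hom) := by
  induction m with
  | zero =>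
    show (ρ_ _).inv ≫ ((tpowAdd W k l).hom ▷ 𝟙_ V) ≫ (α_ _ _ _).hom =
      𝟙 _ ≫ (tpowAdd W k l).hom ≫ (tpow W k ◁ (ρ_ (tpow W l)).inv)
    coherence
  | succ m ih =>
    show (((tpowAdd W (k+l) m).hom ▷ W) ≫ (α_ _ _ _).hom) ≫ _ ≫ _ =
      _ ≫ (((tpowAdd W k (l+m)).hom ▷ W) ≫ (α_ _ _ _).hom) ≫
        (tpow W k ◁ (((tpowAdd W l m).hom ▷ W) ≫ (α_ _ _ _).hom))
    rw [tpow_eqToHom_succ W (Nat.add_assoc k l m)]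
    simp only [tpow]
    calc (((tpowAdd W (k+l) m).hom ▷ W) ≫ (α_ _ _ _).hom) ≫
          ((tpowAdd W k l).hom ▷ (tpow W m ⊗ W)) ≫ (α_ _ _ _).hom
        = (((tpowAdd W (k+l) m).hom ≫ ((tpowAdd W k l).hom ▷ tpow W m) ≫ (α_ _ _ _).hom) ▷ W) ≫
            (α_ _ _ _).hom ≫ (tpow W k ◁ (α_ _ _ _).hom) := by coherence
      _ = _ := by rw [ih]; coherence

end AuxComonoid

set_option maxHeartbeats 1600000 in
/-- let `P = ∏_{k ∈ ℕ} W^{⊗k}` with projections `π_k`, let `c : C ⟶ P` be a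
monomorphism and `Δ : C ⟶ C ⊗ C` a morphism such that
`(π_k ⊗ π_l) ∘ (c ⊗ c) ∘ Δ = (coherence iso) ∘ π_{k+l} ∘ c` for all `k, l`.  Then `Δ` is
coassociative and counital with counit `ε = π_0 ∘ c`, i.e. `(C, Δ, π_0 ∘ c)` is a comonoid. -/
theorem comonoid_of_subobject_of_prod_tpow
    (hflat : ∀ A : V, VeryFlat.{0} A)
    (W : V) [HasProduct (fun k : ℕ => tpow W k)]
    {C : V} (c : C ⟶ ∏ᶜ (fun k : ℕ => tpow W k)) (hc : Mono c)
    (Δ : C ⟶ C ⊗ C)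
    (hΔ : ∀ k l : ℕ,
      Δ ≫ (c ⊗ₘ c) ≫ (Pi.π (fun k : ℕ => tpow W k) k ⊗ₘ Pi.π (fun k : ℕ => tpow W k) l) =
        c ≫ Pi.π (fun k : ℕ => tpow W k) (k + l) ≫ (tpowAdd W k l).hom)
    (ε : C ⟶ 𝟙_ V) (hε : ε = c ≫ Pi.π (fun k : ℕ => tpow W k) 0) :
    Δ ≫ (ε ▷ C) = (λ_ C).inv ∧
    Δ ≫ (C ◁ ε) = (ρ_ C).inv ∧
    Δ ≫ (C ◁ Δ) = Δ ≫ (Δ ▷ C) ≫ (α_ C C C).hom := by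
  classical
  set F : ℕ → V := fun k : ℕ => tpow W k with hFdef
  let f : ∀ k : ℕ, C ⟶ tpow W k := fun k => c ≫ Pi.π F k
  have jm1 : JointlyMonic f := by
    intro X g h hgh
    rw [← cancel_mono c]
    apply limit.hom_ext
    rintro ⟨j⟩
    simpa [f, Pi.π] using hgh j
  have hfe : ∀ {a b : ℕ} (h : a = b),
      f a ≫ eqToHom (show tpow W a = tpow W b by rw [h]) = f b := by
    intro a b h; subst h; simp
  have hf : ∀ k l : ℕ, Δ ≫ (f k ⊗ₘ f l) = f (k + l) ≫ (tpowAdd W k l).hom := by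
    intro k l
    have h := hΔ k l
    calc Δ ≫ (f k ⊗ₘ f l) = Δ ≫ (c ⊗ₘ c) ≫ (Pi.π F k ⊗ₘ Pi.π F l) := by
          rw [← tensorHom_comp_tensorHom]
      _ = c ≫ Pi.π F (k + l) ≫ (tpowAdd W k l).hom := h
      _ = f (k + l) ≫ (tpowAdd W k l).hom := by simp [f]
  refine ⟨?_, ?_, ?_⟩
  · -- left counit
    refine (hflat (𝟙_ V)).2 f jm1 _ _ fun l => ?_
    show (Δ ≫ ε ▷ C) ≫ (𝟙 (𝟙_ V) ⊗ₘ f l) = (λ_ C).inv ≫ (𝟙 (𝟙_ V) ⊗ₘ f l)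
    have h1 : (Δ ≫ ε ▷ C) ≫ (𝟙 (𝟙_ V) ⊗ₘ f l) = Δ ≫ (ε ⊗ₘ f l) := by
      rw [assoc, ← tensorHom_id, tensorHom_comp_tensorHom, comp_id, id_comp]
    have h2 : (ε ⊗ₘ f l) = (f 0 ⊗ₘ f l) := by rw [hε]; rfl
    rw [h1]; erw [h2, hf 0 l, tpowAdd_zero_left, ← assoc, hfe (Nat.zero_add l),
      id_tensorHom, leftUnitor_inv_naturality]
  · -- right counit
    refine (hflat (𝟙_ V)).1 f jm1 _ _ fun k => ?_
    show (Δ ≫ C ◁ ε) ≫ (f k ⊗ₘ 𝟙 (𝟙_ V)) = (ρ_ C).inv ≫ (f k ⊗ₘ 𝟙 (𝟙_ V))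
    have h1 : (Δ ≫ C ◁ ε) ≫ (f k ⊗ₘ 𝟙 (𝟙_ V)) = Δ ≫ (f k ⊗ₘ ε) := by
      rw [assoc, ← id_tensorHom, tensorHom_comp_tensorHom, id_comp, comp_id]
    have h2 : (f k ⊗ₘ ε) = (f k ⊗ₘ f 0) := by rw [hε]; rfl
    have h3 : (tpowAdd W k 0).hom = (ρ_ (tpow W k)).inv := rfl
    have h4 : f (k + 0) = f k := rfl
    rw [h1]; erw [h2, hf k 0]; rw [h3, tensorHom_id, h4]
    exact rightUnitor_inv_naturality (f k)
  · -- coassociativity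
    have jm2 : JointlyMonic (fun p : ℕ × ℕ => f p.1 ⊗ₘ f p.2) := by
      intro X g h hgh
      refine (hflat C).1 f jm1 g h fun k => ?_
      refine (hflat (tpow W k)).2 f jm1 _ _ fun l => ?_
      show (g ≫ (f k ⊗ₘ 𝟙 C)) ≫ (𝟙 (tpow W k) ⊗ₘ f l) =
        (h ≫ (f k ⊗ₘ 𝟙 C)) ≫ (𝟙 (tpow W k) ⊗ₘ f l)
      rw [assoc, tensorHom_comp_tensorHom, comp_id, id_comp, assoc, tensorHom_comp_tensorHom, comp_id, id_comp]
      exact hgh (k, l)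
    have jm3 : JointlyMonic (fun p : ℕ × ℕ × ℕ => f p.1 ⊗ₘ (f p.2.1 ⊗ₘ f p.2.2)) := by
      intro X g h hgh
      refine (hflat (C ⊗ C)).1 f jm1 g h fun k => ?_
      refine (hflat (tpow W k)).2 (fun p : ℕ × ℕ => f p.1 ⊗ₘ f p.2) jm2 _ _ fun p => ?_
      show (g ≫ (f k ⊗ₘ 𝟙 (C ⊗ C))) ≫ (𝟙 (tpow W k) ⊗ₘ (f p.1 ⊗ₘ f p.2)) =
        (h ≫ (f k ⊗ₘ 𝟙 (C ⊗ C))) ≫ (𝟙 (tpow W k) ⊗ₘ (f p.1 ⊗ₘ f p.2))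
      rw [assoc, tensorHom_comp_tensorHom, comp_id, id_comp, assoc, tensorHom_comp_tensorHom, comp_id, id_comp]
      exact hgh (k, p.1, p.2)
    refine jm3 _ _ fun p => ?_
    obtain ⟨k, l, m⟩ := p
    show (Δ ≫ C ◁ Δ) ≫ (f k ⊗ₘ (f l ⊗ₘ f m)) =
      (Δ ≫ (Δ ▷ C) ≫ (α_ C C C).hom) ≫ (f k ⊗ₘ (f l ⊗ₘ f m))
    have lhs_eq : (Δ ≫ C ◁ Δ) ≫ (f k ⊗ₘ (f l ⊗ₘ f m)) =
        f (k + (l + m)) ≫ (tpowAdd W k (l + m)).hom ≫ (tpow W k ◁ (tpowAdd W l m).hom) := by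
      calc (Δ ≫ C ◁ Δ) ≫ (f k ⊗ₘ (f l ⊗ₘ f m))
          = Δ ≫ (𝟙 C ⊗ₘ Δ) ≫ (f k ⊗ₘ (f l ⊗ₘ f m)) := by rw [assoc, id_tensorHom]
        _ = Δ ≫ ((𝟙 C ≫ f k) ⊗ₘ (Δ ≫ (f l ⊗ₘ f m))) := by rw [tensorHom_comp_tensorHom]
        _ = Δ ≫ ((f k ≫ 𝟙 (tpow W k)) ⊗ₘ (f (l + m) ≫ (tpowAdd W l m).hom)) := by
            rw [hf l m, id_comp, comp_id]
        _ = Δ ≫ (f k ⊗ₘ f (l + m)) ≫ (𝟙 (tpow W k) ⊗ₘ (tpowAdd W l m).hom) := by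
            rw [← tensorHom_comp_tensorHom]
        _ = (f (k + (l + m)) ≫ (tpowAdd W k (l + m)).hom) ≫
              (𝟙 (tpow W k) ⊗ₘ (tpowAdd W l m).hom) := by
            rw [← assoc, hf k (l + m)]
        _ = f (k + (l + m)) ≫ (tpowAdd W k (l + m)).hom ≫
              (tpow W k ◁ (tpowAdd W l m).hom) := by
            rw [id_tensorHom, assoc]
    have rhs_eq : (Δ ≫ (Δ ▷ C) ≫ (α_ C C C).hom) ≫ (f k ⊗ₘ (f l ⊗ₘ f m)) =
        f (k + l + m) ≫ (tpowAdd W (k + l) m).hom ≫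
          ((tpowAdd W k l).hom ▷ tpow W m) ≫ (α_ _ _ _).hom := by
      calc (Δ ≫ (Δ ▷ C) ≫ (α_ C C C).hom) ≫ (f k ⊗ₘ (f l ⊗ₘ f m))
          = Δ ≫ (Δ ⊗ₘ 𝟙 C) ≫ ((f k ⊗ₘ f l) ⊗ₘ f m) ≫ (α_ _ _ _).hom := by
            simp only [assoc, ← tensorHom_id]
            rw [← associator_naturality]
        _ = Δ ≫ ((Δ ≫ (f k ⊗ₘ f l)) ⊗ₘ (𝟙 C ≫ f m)) ≫ (α_ _ _ _).hom := by
            rw [tensorHom_comp_tensorHom_assoc]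
        _ = Δ ≫ ((f (k + l) ≫ (tpowAdd W k l).hom) ⊗ₘ (f m ≫ 𝟙 (tpow W m))) ≫
              (α_ _ _ _).hom := by
            rw [hf k l, id_comp, comp_id]
        _ = Δ ≫ (f (k + l) ⊗ₘ f m) ≫ ((tpowAdd W k l).hom ⊗ₘ 𝟙 (tpow W m)) ≫
              (α_ _ _ _).hom := by
            rw [← tensorHom_comp_tensorHom_assoc]
        _ = (f (k + l + m) ≫ (tpowAdd W (k + l) m).hom) ≫
              ((tpowAdd W k l).hom ⊗ₘ 𝟙 (tpow W m)) ≫ (α_ _ _ _).hom := by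
            rw [← assoc, hf (k + l) m]
        _ = f (k + l + m) ≫ (tpowAdd W (k + l) m).hom ≫
              ((tpowAdd W k l).hom ▷ tpow W m) ≫ (α_ _ _ _).hom := by
            rw [tensorHom_id]; simp only [assoc]
    rw [lhs_eq, rhs_eq, tpowAdd_assoc, ← hfe (Nat.add_assoc k l m)]
    simp only [assoc]
end

section
/- Let V be a closed monoidal, locally presentable category with very flat monoidal product, J a small category, and F : J ⥤ Comon(V) a functor with limit L = lim F in the category of comonoids, with limit projections π_Z : L ⟶ F(Z) for Z in J. Then the family of morphisms (U(π_{Z_1}) ⊗ ⋯ ⊗ U(π_{Z_n})) ∘ Δ_L^n : U(L) ⟶ U(F(Z_1)) ⊗ ⋯ ⊗ U(F(Z_n)), indexed by n ∈ ℕ and tuples (Z_1, …, Z_n) of objects of J, is jointly monic in V (for n = 0 this morphism is the counit ε_L : U(L) ⟶ 𝟙_V). -/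
open CategoryTheory Category MonoidalCategory Limits Opposite

universe w v u

variable {V : Type u} [Category.{v} V] [MonoidalCategory V]

/-- The iterated comultiplication `Δ^0 = ε`, `Δ^{n+1} = (Δ^n ⊗ id) ∘ Δ` of a comonoid. -/
def iterComul (C : Comon V) : ∀ n, C.X ⟶ tpow C.X n
  | 0 => ComonObj.counit (X := C.X)
  | n + 1 => ComonObj.comul (X := C.X) ≫ (iterComul C n ▷ C.X)

variable {J : Type v} [SmallCategory J] (F : J ⥤ Comon V)

/-- The tensor product `U(F(Z_1)) ⊗ ⋯ ⊗ U(F(Z_n))` of the underlying objects of the values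
of `F` at a tuple of objects of `J` (with empty tensor product `𝟙_V`). -/
def tupleTensor : ∀ n : ℕ, (Fin n → J) → V
  | 0, _ => 𝟙_ V
  | n + 1, Z => tupleTensor n (fun i => Z i.castSucc) ⊗ (F.obj (Z (Fin.last n))).X

/-- The tensor product `U(π_{Z_1}) ⊗ ⋯ ⊗ U(π_{Z_n})` of the cone legs. -/
def tupleTensorProj (c : Limits.Cone F) :
    ∀ (n : ℕ) (Z : Fin n → J), tpow c.pt.X n ⟶ tupleTensor F n Z
  | 0, _ => 𝟙 _
  | n + 1, Z => tupleTensorProj c n (fun i => Z i.castSucc) ⊗ₘ (c.π.app (Z (Fin.last n))).hom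


section AuxConcat

/-- concatenation iso for tensor powers -/
def tpowConcat (W : V) : ∀ (b a : ℕ), tpow W a ⊗ tpow W b ≅ tpow W (a + b)
  | 0, a => ρ_ (tpow W a)
  | b + 1, a => (α_ (tpow W a) (tpow W b) W).symm ≪≫ whiskerRightIso (tpowConcat W b a) W

lemma iterComul_add (C : Comon V) (a b : ℕ) :
    iterComul C (a + b) =
      ComonObj.comul (X := C.X) ≫ (iterComul C a ⊗ₘ iterComul C b) ≫ (tpowConcat C.X b a).hom := by
  induction b with
  | zero =>
      show iterComul C a = _
      rw [tpowConcat]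
      rw [show (iterComul C a ⊗ₘ iterComul C 0) =
          (C.X ◁ ComonObj.counit (X := C.X)) ≫ (iterComul C a ▷ 𝟙_ V) from tensorHom_def' _ _]
      erw [Category.assoc, ComonObj.comul_counit_assoc]
      erw [← rightUnitor_inv_naturality_assoc, Iso.inv_hom_id, Category.comp_id]
  | succ b ih =>
      show ComonObj.comul (X := C.X) ≫ (iterComul C (a + b) ▷ C.X) = _
      rw [ih]
      have hrhs : (tpowConcat C.X (b+1) a).hom
          = (α_ (tpow C.X a) (tpow C.X b) C.X).inv ≫ ((tpowConcat C.X b a).hom ▷ C.X) := by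
        rw [tpowConcat]; rfl
      rw [hrhs]
      have hb1 : iterComul C (b+1) = ComonObj.comul (X := C.X) ≫ (iterComul C b ▷ C.X) := rfl
      rw [hb1]
      erw [show (iterComul C a ⊗ₘ ComonObj.comul (X := C.X) ≫ (iterComul C b ▷ C.X)) =
          (C.X ◁ (ComonObj.comul (X := C.X) ≫ (iterComul C b ▷ C.X))) ≫
            (iterComul C a ▷ (tpow C.X b ⊗ C.X)) from tensorHom_def' _ _]
      rw [MonoidalCategory.whiskerLeft_comp]
      erw [Category.assoc, Category.assoc, ComonObj.comul_assoc_assoc]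
      simp only [Category.assoc, comp_whiskerRight]
      congr 1
      have key : ((iterComul C a ⊗ₘ iterComul C b) ▷ C.X) =
          (α_ C.X C.X C.X).hom ≫ (C.X ◁ (iterComul C b ▷ C.X)) ≫
            (iterComul C a ▷ (tpow C.X b ⊗ C.X)) ≫
            (α_ (tpow C.X a) (tpow C.X b) C.X).inv := by
        rw [tensorHom_def']
        monoidal
      rw [reassoc_of% key]; rfl

lemma tupleTensorProj_concat (c : Limits.Cone F) :
    ∀ (b a : ℕ) (Y : Fin a → J) (Z : Fin b → J),
    ∃ (U : Fin (a+b) → J) (ξ : tupleTensor F (a+b) U ⟶ tupleTensor F a Y ⊗ tupleTensor F b Z),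
      (tpowConcat c.pt.X b a).inv ≫ (tupleTensorProj F c a Y ⊗ₘ tupleTensorProj F c b Z)
        = tupleTensorProj F c (a+b) U ≫ ξ := by
  intro b
  induction b with
  | zero =>
      intro a Y Z
      refine ⟨Y, (ρ_ _).inv, ?_⟩
      show (ρ_ _).inv ≫ (tupleTensorProj F c a Y ⊗ₘ 𝟙 (𝟙_ V)) = tupleTensorProj F c a Y ≫ (ρ_ _).inv
      rw [tensorHom_id]
      exact (rightUnitor_inv_naturality _).symm
  | succ b ih =>
      intro a Y Z
      obtain ⟨U', ξ', h'⟩ := ih a Y (fun i => Z i.castSucc)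
      have key : ∀ (U'' : Fin (a+b+1) → J),
          (fun i : Fin (a+b) => U'' i.castSucc) = U' → U'' (Fin.last (a+b)) = Z (Fin.last b) →
          ∃ ξ'', (tpowConcat c.pt.X (b+1) a).inv ≫
              (tupleTensorProj F c a Y ⊗ₘ tupleTensorProj F c (b+1) Z)
            = tupleTensorProj F c (a+b+1) U'' ≫ ξ'' := by
        intro U'' h1 h2
        show ∃ ξ'' : (tupleTensor F (a+b) (fun i => U'' i.castSucc) ⊗
              (F.obj (U'' (Fin.last (a+b)))).X) ⟶ tupleTensor F a Y ⊗ tupleTensor F (b+1) Z,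
            (tpowConcat c.pt.X (b+1) a).inv ≫
              (tupleTensorProj F c a Y ⊗ₘ tupleTensorProj F c (b+1) Z)
            = (tupleTensorProj F c (a+b) (fun i => U'' i.castSucc) ⊗ₘ
                (c.π.app (U'' (Fin.last (a+b)))).hom) ≫ ξ''
        revert h2
        generalize U'' (Fin.last (a+b)) = x
        intro h2
        subst h2
        revert h1
        generalize (fun i : Fin (a+b) => U'' i.castSucc) = g
        intro h1
        subst h1
        have hγ : (tpowConcat c.pt.X (b+1) a).inv
            = ((tpowConcat c.pt.X b a).inv ▷ c.pt.X) ≫ (α_ _ _ _).hom := by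
          rw [tpowConcat]; rfl
        have hZ : tupleTensorProj F c (b+1) Z
            = (tupleTensorProj F c b (fun i => Z i.castSucc) ⊗ₘ
                (c.π.app (Z (Fin.last b))).hom) := rfl
        refine ⟨((ξ' ▷ _) ≫ (α_ _ _ _).hom :), ?_⟩
        erw [hγ, hZ, Category.assoc, ← associator_naturality]
        erw [← tensorHom_id (tpowConcat c.pt.X b a).inv, ← Category.assoc, tensorHom_comp_tensorHom,
          Category.id_comp, h']
        erw [show ((tupleTensorProj F c (a+b) g ≫ ξ') ⊗ₘ (c.π.app (Z (Fin.last b))).hom)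
            = (tupleTensorProj F c (a+b) g ⊗ₘ (c.π.app (Z (Fin.last b))).hom) ≫
              (ξ' ▷ (F.obj (Z (Fin.last b))).X) from by
          rw [← tensorHom_id ξ', tensorHom_comp_tensorHom, Category.comp_id], Category.assoc]
        rfl
      obtain ⟨ξ'', h''⟩ := key (Fin.snoc U' (Z (Fin.last b)))
        (funext fun i => Fin.snoc_castSucc _ _ _) (Fin.snoc_last _ _)
      exact ⟨_, ξ'', h''⟩

end AuxConcat

namespace QuotAux
variable {V : Type u} [Category.{v} V]

structure QStage {L : V} {Idx : Type v} (T : Idx → V) (φ : ∀ idx, L ⟶ T idx) :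
    Type (max u v) where
  Q : V
  e : L ⟶ Q
  f : ∀ idx, Q ⟶ T idx
  epi : Epi e
  w : ∀ idx, e ≫ f idx = φ idx

namespace QStage

variable {L : V} {Idx : Type v} {T : Idx → V} {φ : ∀ idx, L ⟶ T idx}

def Le (X Y : QStage T φ) : Prop := ∃ t : X.Q ⟶ Y.Q, X.e ≫ t = Y.e

noncomputable def t {X Y : QStage T φ} (h : X.Le Y) : X.Q ⟶ Y.Q := h.choose

lemma t_w {X Y : QStage T φ} (h : X.Le Y) : X.e ≫ t h = Y.e := h.choose_spec

lemma t_eq {X Y : QStage T φ} (h : X.Le Y) (t' : X.Q ⟶ Y.Q) (ht : X.e ≫ t' = Y.e) :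
    t' = t h := by
  haveI := X.epi
  exact (cancel_epi X.e).1 (by rw [ht, t_w])

lemma Le.refl (X : QStage T φ) : X.Le X := ⟨𝟙 _, Category.comp_id _⟩

lemma Le.trans {X Y Z : QStage T φ} (h₁ : X.Le Y) (h₂ : Y.Le Z) : X.Le Z :=
  ⟨t h₁ ≫ t h₂, by rw [← Category.assoc, t_w, t_w]⟩

lemma t_f {X Y : QStage T φ} (h : X.Le Y) (idx : Idx) : t h ≫ Y.f idx = X.f idx := by
  haveI := X.epi
  apply (cancel_epi X.e).1
  rw [← Category.assoc, t_w, Y.w, X.w]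

section Step

variable {ι : Type v} (S : ι → V) [HasColimitsOfSize.{v, v} V]

abbrev Bad (X : QStage T φ) : Type v :=
  Σ i : ι, { p : (S i ⟶ X.Q) × (S i ⟶ X.Q) // ∀ idx, p.1 ≫ X.f idx = p.2 ≫ X.f idx }

noncomputable def badSrc (X : QStage T φ) : (∐ fun b : Bad S X => S b.1) ⟶ X.Q :=
  Sigma.desc (fun b => b.2.1.1)

noncomputable def badTgt (X : QStage T φ) : (∐ fun b : Bad S X => S b.1) ⟶ X.Q :=
  Sigma.desc (fun b => b.2.1.2)

noncomputable abbrev step (X : QStage T φ) : QStage T φ where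
  Q := coequalizer (badSrc S X) (badTgt S X)
  e := X.e ≫ coequalizer.π _ _
  f idx := coequalizer.desc (X.f idx) (by
    apply Sigma.hom_ext
    intro b
    simp only [badSrc, badTgt, colimit.ι_desc_assoc, Discrete.natTrans_app, Cofan.mk_ι_app]
    exact b.2.2 idx)
  epi := by haveI := X.epi; exact epi_comp _ _
  w idx := by rw [Category.assoc, coequalizer.π_desc, X.w]

lemma step_le (X : QStage T φ) : X.Le (step S X) := ⟨coequalizer.π _ _, rfl⟩

lemma t_step (X : QStage T φ) : t (step_le S X) = coequalizer.π (badSrc S X) (badTgt S X) :=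
  (t_eq _ _ rfl).symm

lemma step_coeq (X : QStage T φ) (b : Bad S X) :
    b.2.1.1 ≫ t (step_le S X) = b.2.1.2 ≫ t (step_le S X) := by
  rw [t_step]
  have h1 : b.2.1.1 = Sigma.ι (fun b : Bad S X => S b.1) b ≫ badSrc S X := by
    simp [badSrc]
  have h2 : b.2.1.2 = Sigma.ι (fun b : Bad S X => S b.1) b ≫ badTgt S X := by
    simp [badTgt]
  rw [h1, h2, Category.assoc, Category.assoc, coequalizer.condition]

lemma step_desc (X : QStage T φ) {Y : V} (w0 : X.Q ⟶ Y)
    (hw : ∀ b : Bad S X, b.2.1.1 ≫ w0 = b.2.1.2 ≫ w0) :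
    ∃ w' : (step S X).Q ⟶ Y, t (step_le S X) ≫ w' = w0 := by
  refine ⟨coequalizer.desc w0 ?_, by rw [t_step, coequalizer.π_desc]⟩
  apply Sigma.hom_ext
  intro b
  simp only [badSrc, badTgt, colimit.ι_desc_assoc, Discrete.natTrans_app, Cofan.mk_ι_app]
  exact hw b

end Step

section Chain

variable {P : Type v} [LinearOrder P] [HasColimitsOfSize.{v, v} V]

noncomputable abbrev chainFunctor (D : P → QStage T φ) (hD : ∀ p q : P, p ≤ q → (D p).Le (D q)) : P ⥤ V where
  obj p := (D p).Q
  map {p q} h := t (hD p q (leOfHom h))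
  map_id p := (t_eq _ _ (Category.comp_id _)).symm
  map_comp {p q r} h₁ h₂ :=
    (t_eq _ _ (by rw [← Category.assoc, t_w, t_w])).symm

noncomputable def chainStage (D : P → QStage T φ) (hD : ∀ p q : P, p ≤ q → (D p).Le (D q))
    (p₀ : P) : QStage T φ where
  Q := colimit (chainFunctor D hD)
  e := (D p₀).e ≫ colimit.ι (chainFunctor D hD) p₀
  f idx := colimit.desc (chainFunctor D hD)
    { pt := T idx
      ι := { app := fun p => (D p).f idx
             naturality := fun p q h => by
               simpa [chainFunctor] using t_f (hD p q (leOfHom h)) idx } }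
  epi := by
    have key : ∀ p : P, (D p).e ≫ colimit.ι (chainFunctor D hD) p
        = (D p₀).e ≫ colimit.ι (chainFunctor D hD) p₀ := by
      intro p
      rcases le_total p₀ p with hle | hle
      · rw [← t_w (hD p₀ p hle), Category.assoc,
          ← colimit.w (chainFunctor D hD) (homOfLE hle)]
      · rw [← t_w (hD p p₀ hle), Category.assoc,
          ← colimit.w (chainFunctor D hD) (homOfLE hle)]
    constructor
    intro Z g h H
    simp only [Category.assoc] at H
    apply colimit.hom_ext
    intro p
    haveI := (D p).epi
    apply (cancel_epi (D p).e).1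
    rw [← Category.assoc, ← Category.assoc, key p, Category.assoc, Category.assoc, H]
  w idx := by
    rw [Category.assoc, colimit.ι_desc]
    exact (D p₀).w idx

lemma chain_e_eq (D : P → QStage T φ) (hD : ∀ p q : P, p ≤ q → (D p).Le (D q)) (p₀ p : P) :
    (D p).e ≫ colimit.ι (chainFunctor D hD) p = (chainStage D hD p₀).e := by
  show _ = (D p₀).e ≫ colimit.ι (chainFunctor D hD) p₀
  rcases le_total p₀ p with hle | hle
  · rw [← t_w (hD p₀ p hle), Category.assoc, ← colimit.w (chainFunctor D hD) (homOfLE hle)]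
  · rw [← t_w (hD p p₀ hle), Category.assoc, ← colimit.w (chainFunctor D hD) (homOfLE hle)]

lemma chain_le (D : P → QStage T φ) (hD : ∀ p q : P, p ≤ q → (D p).Le (D q)) (p₀ p : P) :
    (D p).Le (chainStage D hD p₀) := ⟨colimit.ι (chainFunctor D hD) p, chain_e_eq D hD p₀ p⟩

lemma chain_i_f (D : P → QStage T φ) (hD : ∀ p q : P, p ≤ q → (D p).Le (D q)) (p₀ p : P)
    (idx : Idx) :
    colimit.ι (chainFunctor D hD) p ≫ (chainStage D hD p₀).f idx = (D p).f idx :=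
  colimit.ι_desc _ _

lemma chain_desc (D : P → QStage T φ) (hD : ∀ p q : P, p ≤ q → (D p).Le (D q)) (p₀ : P)
    {Y : V} (w0 : L ⟶ Y) (wp : ∀ p, (D p).Q ⟶ Y) (hwp : ∀ p, (D p).e ≫ wp p = w0) :
    ∃ w' : (chainStage D hD p₀).Q ⟶ Y, (chainStage D hD p₀).e ≫ w' = w0 := by
  refine ⟨colimit.desc _
    { pt := Y
      ι := { app := wp
             naturality := fun p q h => by
               haveI := (D p).epi
               simp only [chainFunctor, Functor.const_obj_obj, Functor.const_obj_map,
                 Category.comp_id]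
               apply (cancel_epi (D p).e).1
               rw [← Category.assoc, t_w, hwp, hwp] } }, ?_⟩
  show ((D p₀).e ≫ colimit.ι (chainFunctor D hD) p₀) ≫ _ = w0
  rw [Category.assoc, colimit.ι_desc]
  exact hwp p₀

end Chain

section Tower

variable {O : Type v} [LinearOrder O] [SuccOrder O] [OrderBot O] [WellFoundedLT O]
  [NoMaxOrder O]
variable {ι : Type v} [HasColimitsOfSize.{v, v} V]

lemma trichot (β : O) :
    β = ⊥ ∨ (∃ δ, δ < β ∧ β = Order.succ δ) ∨ Order.IsSuccLimit β := by
  by_cases h1 : β = ⊥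
  · exact Or.inl h1
  by_cases h2 : Order.IsSuccPrelimit β
  · exact Or.inr (Or.inr ⟨fun hm => h1 (isMin_iff_eq_bot.1 hm), h2⟩)
  · obtain ⟨δ, hδ⟩ := not_forall.1 h2
    have hcov : δ ⋖ β := not_not.1 hδ
    exact Or.inr (Or.inl ⟨δ, hcov.lt, hcov.succ_eq.symm⟩)

variable (S : ι → V) (X₀ : QStage T φ)

structure Sys (γ : O) : Type (max u v) where
  st : ∀ β : O, β ≤ γ → QStage T φ
  mono : ∀ (β β' : O) (h : β ≤ β') (h' : β' ≤ γ), (st β (h.trans h')).Le (st β' h')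
  hbot : st ⊥ bot_le = X₀
  hsucc : ∀ (β : O) (h : β < γ),
    st (Order.succ β) (Order.succ_le_of_lt h) = step S (st β h.le)
  hlim : ∀ (β : O) (hβ : β ≤ γ) (hl : Order.IsSuccLimit β)
    (hD : ∀ p q : Set.Iio β, p ≤ q →
      (st p.1 (le_trans (le_of_lt p.2) hβ)).Le (st q.1 (le_trans (le_of_lt q.2) hβ))),
    st β hβ = chainStage (fun p : Set.Iio β => st p.1 (le_trans (le_of_lt p.2) hβ))
        hD ⟨⊥, bot_lt_iff_ne_bot.2 hl.ne_bot⟩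

lemma chainStage_congr {P : Type v} [LinearOrder P] (D D' : P → QStage T φ)
    (hD : ∀ p q : P, p ≤ q → (D p).Le (D q)) (hD' : ∀ p q : P, p ≤ q → (D' p).Le (D' q))
    (p₀ : P) (h : D = D') : chainStage D hD p₀ = chainStage D' hD' p₀ := by
  subst h; rfl

lemma sys_ext : ∀ (β : O) {γ γ' : O} (s : Sys S X₀ γ) (s' : Sys S X₀ γ')
    (h : β ≤ γ) (h' : β ≤ γ'), s.st β h = s'.st β h' := by
  intro β
  induction β using WellFoundedLT.induction with
  | _ β IH =>
    intro γ γ' s s' h h'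
    rcases trichot β with hb | ⟨δ, hδ, hs⟩ | hl
    · subst hb
      exact s.hbot.trans s'.hbot.symm
    · subst hs
      have hδγ : δ < γ := lt_of_lt_of_le (Order.lt_succ δ) h
      have hδγ' : δ < γ' := lt_of_lt_of_le (Order.lt_succ δ) h'
      refine (s.hsucc δ hδγ).trans (Eq.trans ?_ (s'.hsucc δ hδγ').symm)
      rw [IH δ hδ s s' hδγ.le hδγ'.le]
    · rw [s.hlim β h hl (fun p q hpq => s.mono p.1 q.1 hpq _),
        s'.hlim β h' hl (fun p q hpq => s'.mono p.1 q.1 hpq _)]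
      exact chainStage_congr _ _ _ _ _ (funext fun p => IH p.1 p.2 _ _ _ _)

theorem sys_nonempty : ∀ γ : O, Nonempty (Sys S X₀ γ) := by
  intro γ
  induction γ using WellFoundedLT.induction with
  | _ γ IH =>
  rcases trichot γ with hb | ⟨δ, hδ, hs⟩ | hl
  · subst hb
    refine ⟨⟨fun _ _ => X₀, fun β β' h h' => Le.refl X₀, rfl,
      fun β h => absurd h not_lt_bot, fun β hβ hlβ hD => ?_⟩⟩
    rw [le_bot_iff.1 hβ] at hlβ
    exact absurd hlβ Order.not_isSuccLimit_bot
  · subst hs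
    obtain ⟨s⟩ := IH δ hδ
    refine ⟨⟨fun β h => if hβ : β ≤ δ then s.st β hβ else step S (s.st δ le_rfl),
      ?_, ?_, ?_, ?_⟩⟩
    · intro β β' h h'
      by_cases hβ' : β' ≤ δ
      · have hβ : β ≤ δ := h.trans hβ'
        rw [dif_pos hβ, dif_pos hβ']
        exact s.mono β β' h hβ'
      · rw [dif_neg hβ']
        by_cases hβ : β ≤ δ
        · rw [dif_pos hβ]
          exact (s.mono β δ hβ le_rfl).trans (step_le S _)
        · rw [dif_neg hβ]
          exact Le.refl _
    · rw [dif_pos (bot_le : (⊥ : O) ≤ δ)]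
      exact s.hbot
    · intro β h
      have hβδ : β ≤ δ := Order.lt_succ_iff.1 h
      rcases lt_or_eq_of_le hβδ with hlt | heq
      · rw [dif_pos (Order.succ_le_of_lt hlt), dif_pos hβδ]
        exact s.hsucc β hlt
      · subst heq
        rw [dif_neg (not_le.2 (Order.lt_succ β)), dif_pos le_rfl]
    · intro β hβ hlβ hD
      by_cases hβδ : β ≤ δ
      · rw [dif_pos hβδ]
        refine (s.hlim β hβδ hlβ (fun p q hpq => s.mono p.1 q.1 hpq _)).trans
          (chainStage_congr _ _ _ _ _ (funext fun p => ?_))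
        rw [dif_pos (le_trans (le_of_lt p.2) hβδ)]
      · exfalso
        have heq : β = Order.succ δ := le_antisymm hβ (Order.succ_le_of_lt (not_le.1 hβδ))
        rw [heq] at hlβ
        exact absurd hlβ (Order.not_isSuccLimit_succ_of_not_isMax (not_isMax δ))
  · have hss : ∀ β : O, β < γ → Sys S X₀ β := fun β h => (IH β h).some
    have hD0 : ∀ p q : Set.Iio γ, p ≤ q →
        ((hss p.1 p.2).st p.1 le_rfl).Le ((hss q.1 q.2).st q.1 le_rfl) := by
      intro p q hpq
      have h1 := (hss q.1 q.2).mono p.1 q.1 hpq le_rfl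
      rwa [sys_ext S X₀ p.1 (hss q.1 q.2) (hss p.1 p.2) _ le_rfl] at h1
    refine ⟨⟨fun β h => if hβ : β < γ then (hss β hβ).st β le_rfl
        else chainStage (fun p : Set.Iio γ => (hss p.1 p.2).st p.1 le_rfl) hD0
          ⟨⊥, bot_lt_iff_ne_bot.2 hl.ne_bot⟩, ?_, ?_, ?_, ?_⟩⟩
    · intro β β' h h'
      by_cases hβ' : β' < γ
      · have hβ : β < γ := lt_of_le_of_lt h hβ'
        rw [dif_pos hβ, dif_pos hβ']
        have h1 := (hss β' hβ').mono β β' h le_rfl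
        rwa [sys_ext S X₀ β (hss β' hβ') (hss β hβ) _ le_rfl] at h1
      · rw [dif_neg hβ']
        by_cases hβ : β < γ
        · rw [dif_pos hβ]
          exact chain_le _ hD0 _ ⟨β, hβ⟩
        · rw [dif_neg hβ]
          exact Le.refl _
    · rw [dif_pos (bot_lt_iff_ne_bot.2 hl.ne_bot)]
      exact (hss ⊥ _).hbot
    · intro β h
      have hsβ : Order.succ β < γ := hl.succ_lt h
      rw [dif_pos hsβ, dif_pos h]
      have h1 := (hss _ hsβ).hsucc β (Order.lt_succ β)
      rw [h1, sys_ext S X₀ β (hss _ hsβ) (hss β h) _ le_rfl]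
    · intro β hβ hlβ hD
      by_cases hβγ : β < γ
      · rw [dif_pos hβγ]
        refine ((hss β hβγ).hlim β le_rfl hlβ
          (fun p q hpq => (hss β hβγ).mono p.1 q.1 hpq _)).trans
          (chainStage_congr _ _ _ _ _ (funext fun p => ?_))
        rw [dif_pos (lt_trans p.2 hβγ)]
        exact sys_ext S X₀ p.1 (hss β hβγ) (hss p.1 _) _ le_rfl
      · obtain rfl : β = γ := le_antisymm hβ (not_lt.1 hβγ)
        rw [dif_neg hβγ]
        exact (chainStage_congr _ _ _ _ _ (funext fun p => by
          rw [dif_pos (show (p : O) < β from p.2)])).symm.symm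

noncomputable def stg (γ : O) : QStage T φ := ((sys_nonempty S X₀ γ).some).st γ le_rfl

lemma stg_eq {γ γ' : O} (s : Sys S X₀ γ') (h : γ ≤ γ') : stg S X₀ γ = s.st γ h :=
  sys_ext S X₀ γ _ s le_rfl h

lemma stg_mono {β γ : O} (h : β ≤ γ) : (stg S X₀ β).Le (stg S X₀ γ) := by
  have h1 := ((sys_nonempty S X₀ γ).some).mono β γ h le_rfl
  rwa [← stg_eq S X₀ _ h] at h1

lemma stg_bot : stg S X₀ (⊥ : O) = X₀ := ((sys_nonempty S X₀ (⊥ : O)).some).hbot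

lemma stg_succ (β : O) : stg S X₀ (Order.succ β) = step S (stg S X₀ β) := by
  have s := (sys_nonempty S X₀ (Order.succ β)).some
  have h1 := s.hsucc β (Order.lt_succ β)
  rw [stg_eq S X₀ s (le_refl (Order.succ β)), h1, ← stg_eq S X₀ s (Order.lt_succ β).le]

lemma stg_lim (γ : O) (hl : Order.IsSuccLimit γ)
    (hD : ∀ p q : Set.Iio γ, p ≤ q → (stg S X₀ p.1).Le (stg S X₀ q.1)) :
    stg S X₀ γ = chainStage (fun p : Set.Iio γ => stg S X₀ p.1) hD
      ⟨⊥, bot_lt_iff_ne_bot.2 hl.ne_bot⟩ := by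
  have s := (sys_nonempty S X₀ γ).some
  have h1 := s.hlim γ le_rfl hl (fun p q hpq => s.mono p.1 q.1 hpq _)
  rw [stg_eq S X₀ s (le_refl γ), h1]
  exact chainStage_congr _ _ _ _ _ (funext fun p => (stg_eq S X₀ s (le_of_lt p.2)).symm)

noncomputable def towerTop : QStage T φ :=
  chainStage (fun γ : O => stg S X₀ γ) (fun _ _ h => stg_mono S X₀ h) ⊥

lemma tower_factor (i : ι)
    (pres : PreservesColimitsOfShape O (coyoneda.obj (op (S i))))
    (u : S i ⟶ (towerTop (O := O) S X₀).Q) :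
    ∃ (γ : O) (u' : S i ⟶ (stg S X₀ γ).Q),
      u' ≫ colimit.ι (chainFunctor (fun γ : O => stg S X₀ γ) (fun _ _ h => stg_mono S X₀ h)) γ
        = u := by
  have hco := isColimitOfPreserves (coyoneda.obj (op (S i)))
    (colimit.isColimit (chainFunctor (fun γ : O => stg S X₀ γ) (fun _ _ h => stg_mono S X₀ h)))
  obtain ⟨γ, u', hu⟩ := Types.jointly_surjective _ hco u
  exact ⟨γ, u', hu⟩

theorem towerTop_jm
    (hepi : ∀ (W : V) {X : V} (f g : W ⟶ X), (∀ i (e : S i ⟶ W), e ≫ f = e ≫ g) → f = g)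
    (pres : ∀ i, PreservesColimitsOfShape O (coyoneda.obj (op (S i)))) :
    ∀ ⦃W : V⦄ (g h : W ⟶ (towerTop (O := O) S X₀).Q),
      (∀ idx, g ≫ (towerTop (O := O) S X₀).f idx = h ≫ (towerTop (O := O) S X₀).f idx) →
        g = h := by
  have key : ∀ (i : ι) (u v : S i ⟶ (towerTop (O := O) S X₀).Q),
      (∀ idx, u ≫ (towerTop (O := O) S X₀).f idx = v ≫ (towerTop (O := O) S X₀).f idx) →
        u = v := by
    intro i u v huv
    obtain ⟨γ₁, u', hu⟩ := tower_factor S X₀ i (pres i) u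
    obtain ⟨γ₂, v', hv⟩ := tower_factor S X₀ i (pres i) v
    set D := fun γ : O => stg S X₀ γ with hd
    set hD : ∀ p q : O, p ≤ q → (D p).Le (D q) := fun _ _ h => stg_mono S X₀ h with hhd
    set γ := max γ₁ γ₂ with hγ
    set u₂ := u' ≫ (chainFunctor D hD).map (homOfLE (le_max_left γ₁ γ₂)) with hu2
    set v₂ := v' ≫ (chainFunctor D hD).map (homOfLE (le_max_right γ₁ γ₂)) with hv2
    have hu' : u₂ ≫ colimit.ι (chainFunctor D hD) γ = u := by
      rw [hu2, Category.assoc, colimit.w]; exact hu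
    have hv' : v₂ ≫ colimit.ι (chainFunctor D hD) γ = v := by
      rw [hv2, Category.assoc, colimit.w]; exact hv
    have hbad : ∀ idx, u₂ ≫ (stg S X₀ γ).f idx = v₂ ≫ (stg S X₀ γ).f idx := by
      intro idx
      have e1 : u ≫ (towerTop (O := O) S X₀).f idx = u₂ ≫ (stg S X₀ γ).f idx := by
        rw [← hu']
        exact (Category.assoc _ _ _).trans (congrArg (fun z => u₂ ≫ z) (chain_i_f D hD ⊥ γ idx))
      have e2 : v ≫ (towerTop (O := O) S X₀).f idx = v₂ ≫ (stg S X₀ γ).f idx := by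
        rw [← hv']
        exact (Category.assoc _ _ _).trans (congrArg (fun z => v₂ ≫ z) (chain_i_f D hD ⊥ γ idx))
      rw [← e1, ← e2, huv idx]
    have key2 : ∀ (hle : (stg S X₀ γ).Le (stg S X₀ (Order.succ γ))),
        u₂ ≫ t hle = v₂ ≫ t hle := by
      rw [stg_succ]
      intro hle
      exact step_coeq S (stg S X₀ γ) ⟨i, ⟨(u₂, v₂), hbad⟩⟩
    have hmap : (chainFunctor D hD).map (homOfLE (Order.le_succ γ))
        = t (stg_mono S X₀ (Order.le_succ γ)) := rfl
    calc (id u : S i ⟶ colimit (chainFunctor D hD)) = u₂ ≫ colimit.ι (chainFunctor D hD) γ := hu'.symm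
      _ = u₂ ≫ (chainFunctor D hD).map (homOfLE (Order.le_succ γ))
            ≫ colimit.ι (chainFunctor D hD) (Order.succ γ) := by rw [colimit.w]
      _ = (u₂ ≫ t (stg_mono S X₀ (Order.le_succ γ)))
            ≫ colimit.ι (chainFunctor D hD) (Order.succ γ) := by
              rw [hmap]; simp only [hu2, Category.assoc]
      _ = (v₂ ≫ t (stg_mono S X₀ (Order.le_succ γ)))
            ≫ colimit.ι (chainFunctor D hD) (Order.succ γ) := by
              rw [key2 (stg_mono S X₀ (Order.le_succ γ))]
      _ = v₂ ≫ (chainFunctor D hD).map (homOfLE (Order.le_succ γ))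
            ≫ colimit.ι (chainFunctor D hD) (Order.succ γ) := by
              rw [hmap]; simp only [hv2, Category.assoc]
      _ = (id v : S i ⟶ colimit (chainFunctor D hD)) := by rw [colimit.w]; exact hv'
  intro W g h hgh
  apply hepi
  intro i e
  apply key
  intro idx
  rw [Category.assoc, Category.assoc, hgh idx]

theorem tower_desc {Y : V} (w : L ⟶ Y) {A : Type v} {Ya : A → V}
    (ρ : ∀ a, Y ⟶ Ya a)
    (hρ : ∀ ⦃W : V⦄ (g h : W ⟶ Y), (∀ a, g ≫ ρ a = h ≫ ρ a) → g = h)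
    (hcond : ∀ a, ∃ (idx : Idx) (ξ : T idx ⟶ Ya a), w ≫ ρ a = φ idx ≫ ξ)
    (hbase : ∃ w0 : X₀.Q ⟶ Y, X₀.e ≫ w0 = w) :
    ∃ w' : (towerTop (O := O) S X₀).Q ⟶ Y, (towerTop (O := O) S X₀).e ≫ w' = w := by
  have stepdesc : ∀ (X : QStage T φ) (wX : X.Q ⟶ Y), X.e ≫ wX = w →
      ∃ w' : (step S X).Q ⟶ Y, (step S X).e ≫ w' = w := by
    intro X wX hwX
    have hcondX : ∀ a, ∃ (idx : Idx) (ξ : T idx ⟶ Ya a), wX ≫ ρ a = X.f idx ≫ ξ := by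
      intro a
      obtain ⟨idx, ξ, hξ⟩ := hcond a
      refine ⟨idx, ξ, ?_⟩
      haveI := X.epi
      apply (cancel_epi X.e).1
      rw [← Category.assoc, hwX, hξ, ← X.w idx, Category.assoc]
    have hcoeq : ∀ b : Bad S X, b.2.1.1 ≫ wX = b.2.1.2 ≫ wX := by
      intro b
      apply hρ
      intro a
      obtain ⟨idx, ξ, hξ⟩ := hcondX a
      rw [Category.assoc, Category.assoc, hξ, ← Category.assoc, ← Category.assoc, b.2.2 idx]
    obtain ⟨w', hw'⟩ := step_desc S X wX hcoeq
    refine ⟨w', ?_⟩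
    show (X.e ≫ coequalizer.π _ _) ≫ w' = w
    rw [Category.assoc, ← t_step S X, hw', hwX]
  have stage : ∀ γ : O, ∃ wγ : (stg S X₀ γ).Q ⟶ Y, (stg S X₀ γ).e ≫ wγ = w := by
    intro γ
    induction γ using WellFoundedLT.induction with
    | _ γ IH =>
    rcases trichot γ with hb | ⟨δ, hδ, hs⟩ | hl
    · subst hb
      rw [stg_bot]
      exact hbase
    · subst hs
      obtain ⟨wδ, hwδ⟩ := IH δ hδ
      rw [stg_succ]
      exact stepdesc _ wδ hwδ
    · rw [stg_lim S X₀ γ hl (fun p q hpq => stg_mono S X₀ hpq)]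
      exact chain_desc _ _ _ w (fun p => (IH p.1 p.2).choose)
        (fun p => (IH p.1 p.2).choose_spec)
  exact chain_desc _ _ _ w (fun γ => (stage γ).choose) (fun γ => (stage γ).choose_spec)

end Tower
end QStage
end QuotAux


/-- for `V` closed monoidal, locally presentable with very flat monoidal
product, and `L = lim F` a limit of comonoids with projections `π_Z`, the family of morphisms
`(U(π_{Z_1}) ⊗ ⋯ ⊗ U(π_{Z_n})) ∘ Δ_L^n`, indexed by `n ∈ ℕ` and tuples `(Z_1, …, Z_n)` of
objects of `J`, is jointly monic in `V` (for `n = 0` this morphism is the counit). -/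
theorem limit_comonoid_jointlyMonic
    [MonoidalClosed V] (hV : _root_.IsLocallyPresentable V) (hflat : ∀ A : V, VeryFlat.{v} A)
    (c : Limits.Cone F) (hc : Limits.IsLimit c) :
    JointlyMonic (fun s : Σ n : ℕ, Fin n → J =>
      iterComul c.pt s.1 ≫ tupleTensorProj F c s.1 s.2) := by
  classical
  obtain ⟨hcolim, κ, hκ, ι, S, hpres, hgen⟩ := hV
  haveI := hcolim
  -- index family
  set Idx := (Σ n : ℕ, Fin n → J) with hIdx
  set T : Idx → V := fun s => tupleTensor F s.1 s.2 with hT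
  set φ : ∀ s : Idx, c.pt.X ⟶ T s :=
    fun s => iterComul c.pt s.1 ≫ tupleTensorProj F c s.1 s.2 with hφ
  -- jointly epic family from the generators
  have hepi : ∀ (W : V) {X : V} (f g : W ⟶ X),
      (∀ (i : ι) (e0 : S i ⟶ W), e0 ≫ f = e0 ≫ g) → f = g := by
    intro W X f g hfg
    obtain ⟨Jw, instJw, Fw, cc, hfil, hobj, ⟨hcolim2⟩, ⟨iso⟩⟩ := hgen W
    have hj : ∀ j, cc.ι.app j ≫ (iso.hom ≫ f) = cc.ι.app j ≫ (iso.hom ≫ g) := by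
      intro j
      obtain ⟨i, hi⟩ := hobj j
      have h0 := hfg i (eqToHom hi.symm ≫ cc.ι.app j ≫ iso.hom)
      simp only [Category.assoc] at h0
      exact (cancel_epi (eqToHom hi.symm)).1 h0
    have h2 : iso.hom ≫ f = iso.hom ≫ g := hcolim2.hom_ext hj
    exact (cancel_epi iso.hom).1 h2
  -- the well-ordered index
  set O := κ.ord.ToType with hO
  letI : SuccOrder O := SuccOrder.ofLinearWellFoundedLT O
  letI : OrderBot O := Ordinal.toTypeOrderBot
    (fun h0 => hκ.pos.ne' (Cardinal.ord_eq_zero.1 h0))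
  haveI : NoMaxOrder O := by
    constructor
    intro a
    have hlim := Cardinal.isSuccLimit_ord hκ.aleph0_le
    set e := (Ordinal.ToType.mk (o := κ.ord)) with he
    refine ⟨e ⟨(e.symm a).1 + 1, ?_⟩, ?_⟩
    · exact hlim.succ_lt (show ((e.symm a : Set.Iio κ.ord) : Ordinal) < κ.ord from (e.symm a).2)
    · have hx : e.symm a < (⟨(e.symm a).1 + 1, hlim.succ_lt (show ((e.symm a : Set.Iio κ.ord) : Ordinal) < κ.ord from (e.symm a).2)⟩ : Set.Iio κ.ord) := by
        exact Subtype.mk_lt_mk.2 (Order.lt_succ _)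
      have h3 := e.lt_iff_lt.2 hx
      rwa [OrderIso.apply_symm_apply] at h3
  have hOfilt : IsCardinalFilteredCategory O κ := by
    intro K _ hK Fk
    set e := (Ordinal.ToType.mk (o := κ.ord)) with he
    have hKobj : Cardinal.mk K < κ := by
      refine lt_of_le_of_lt (Cardinal.mk_le_of_injective
        (f := fun a : K => (⟨a, a, 𝟙 a⟩ : Σ a : K, Σ b : K, a ⟶ b)) ?_) hK
      intro a b h
      exact congrArg Sigma.fst h
    set f : K → Ordinal := fun a => ((e.symm (Fk.obj a)) : Set.Iio κ.ord).1 with hf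
    have hflt : ∀ a, f a < κ.ord := fun a => (e.symm (Fk.obj a)).2
    have hsup : iSup f < κ.ord := Ordinal.iSup_lt_ord (by rw [hκ.cof_eq]; exact hKobj) hflt
    have hb : ∀ a : K, Fk.obj a ≤ e ⟨iSup f, hsup⟩ := by
      intro a
      have h1 : e.symm (Fk.obj a) ≤ (⟨iSup f, hsup⟩ : Set.Iio κ.ord) :=
        Subtype.mk_le_mk.2 (Ordinal.le_iSup f a)
      have h2 := e.le_iff_le.2 h1
      rwa [OrderIso.apply_symm_apply] at h2
    exact ⟨{ pt := e ⟨iSup f, hsup⟩,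
             ι := { app := fun a => homOfLE (hb a),
                    naturality := fun _ _ _ => Subsingleton.elim _ _ } }⟩
  -- the tower
  set X₀ : QuotAux.QStage T φ :=
    ⟨c.pt.X, 𝟙 _, φ, inferInstance, fun idx => Category.id_comp _⟩ with hX₀
  set Qt := QuotAux.QStage.towerTop (O := O) S X₀ with hQt
  haveI hQepi : Epi Qt.e := Qt.epi
  have hjmQ : JointlyMonic.{v} Qt.f :=
    QuotAux.QStage.towerTop_jm S X₀ hepi (fun i => (hpres i O hOfilt).some)
  -- joint monicity of the doubled family
  have hjm2 : ∀ ⦃W : V⦄ (g h : W ⟶ Qt.Q ⊗ Qt.Q),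
      (∀ p : Idx × Idx, g ≫ (Qt.f p.1 ⊗ₘ Qt.f p.2) = h ≫ (Qt.f p.1 ⊗ₘ Qt.f p.2)) → g = h := by
    have j1 : JointlyMonic.{v} (fun a : Idx => Qt.f a ⊗ₘ 𝟙 Qt.Q) :=
      (hflat Qt.Q).1 Qt.f hjmQ
    have j2 : ∀ a : Idx, JointlyMonic.{v} (fun b : Idx => 𝟙 (T a) ⊗ₘ Qt.f b) :=
      fun a => (hflat (T a)).2 Qt.f hjmQ
    intro W g h hgh
    apply j1
    intro a
    apply j2 a
    intro b
    have hsplit : (Qt.f a ⊗ₘ 𝟙 Qt.Q) ≫ (𝟙 (T a) ⊗ₘ Qt.f b) = (Qt.f a ⊗ₘ Qt.f b) := by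
      rw [tensorHom_comp_tensorHom, Category.comp_id, Category.id_comp]
    rw [Category.assoc, Category.assoc, hsplit]
    exact hgh (a, b)
  -- counit
  set εQ : Qt.Q ⟶ 𝟙_ V := Qt.f ⟨0, Fin.elim0⟩ with hεdef
  have hεQ : Qt.e ≫ εQ = ComonObj.counit (X := c.pt.X) := by
    have h1 := Qt.w ⟨0, Fin.elim0⟩
    have h2 : φ ⟨0, Fin.elim0⟩ = ComonObj.counit (X := c.pt.X) := Category.comp_id _
    erw [hεdef, h1, h2]
  -- the cone maps
  have hψbase : ∀ Z : J, φ ⟨1, fun _ => Z⟩ = (c.π.app Z).hom ≫ (λ_ _).inv := by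
    intro Z
    show (ComonObj.comul (X := c.pt.X) ≫ (ComonObj.counit (X := c.pt.X) ▷ c.pt.X)) ≫ (𝟙 (𝟙_ V) ⊗ₘ (c.π.app Z).hom) = _
    rw [ComonObj.counit_comul, id_tensorHom]
    exact (leftUnitor_inv_naturality _).symm
  set ψ : ∀ Z : J, Qt.Q ⟶ (F.obj Z).X :=
    fun Z => Qt.f ⟨1, fun _ => Z⟩ ≫ (λ_ _).hom with hψdef
  have hψ : ∀ Z, Qt.e ≫ ψ Z = (c.π.app Z).hom := by
    intro Z
    rw [hψdef]
    erw [← Category.assoc]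
    rw [show Qt.e ≫ Qt.f ⟨1, fun _ => Z⟩ = φ ⟨1, fun _ => Z⟩ from Qt.w _, hψbase]
    erw [Category.assoc, Iso.inv_hom_id, Category.comp_id]
  -- concatenation property
  have hconcat : ∀ sa sb : Idx, ∃ (m : Idx) (ξ : T m ⟶ T sa ⊗ T sb),
      ComonObj.comul (X := c.pt.X) ≫ (φ sa ⊗ₘ φ sb) = φ m ≫ ξ := by
    rintro ⟨a, Y⟩ ⟨b, Z⟩
    obtain ⟨U, ξ, hξ⟩ := tupleTensorProj_concat F c b a Y Z
    refine ⟨⟨a+b, U⟩, ξ, ?_⟩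
    show ComonObj.comul (X := c.pt.X) ≫ ((iterComul c.pt a ≫ tupleTensorProj F c a Y) ⊗ₘ
        (iterComul c.pt b ≫ tupleTensorProj F c b Z))
      = (iterComul c.pt (a+b) ≫ tupleTensorProj F c (a+b) U) ≫ ξ
    rw [← tensorHom_comp_tensorHom, iterComul_add c.pt a b]
    simp only [Category.assoc]
    congr 2
    rw [← hξ, ← Category.assoc, Iso.hom_inv_id, Category.id_comp]
  -- descend the comultiplication
  have hcond : ∀ p : Idx × Idx, ∃ (m : Idx) (ξ : T m ⟶ T p.1 ⊗ T p.2),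
      (ComonObj.comul (X := c.pt.X) ≫ (Qt.e ⊗ₘ Qt.e)) ≫ (Qt.f p.1 ⊗ₘ Qt.f p.2) = φ m ≫ ξ := by
    intro p
    obtain ⟨m, ξ, hm⟩ := hconcat p.1 p.2
    refine ⟨m, ξ, ?_⟩
    rw [Category.assoc, tensorHom_comp_tensorHom, Qt.w, Qt.w]
    exact hm
  obtain ⟨ΔQ, hΔQ⟩ := QuotAux.QStage.tower_desc (O := O) S X₀
    (ComonObj.comul (X := c.pt.X) ≫ (Qt.e ⊗ₘ Qt.e)) (fun p : Idx × Idx => Qt.f p.1 ⊗ₘ Qt.f p.2) hjm2 hcond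
    ⟨ComonObj.comul (X := c.pt.X) ≫ (Qt.e ⊗ₘ Qt.e), Category.id_comp _⟩
  have hΔQ' : Qt.e ≫ ΔQ = ComonObj.comul (X := c.pt.X) ≫ (Qt.e ⊗ₘ Qt.e) := hΔQ
  -- comonoid axioms
  have hQcc : ΔQ ≫ (εQ ▷ Qt.Q) = (λ_ Qt.Q).inv := by
    apply (cancel_epi Qt.e).1
    rw [← Category.assoc, hΔQ', Category.assoc]
    rw [show (Qt.e ⊗ₘ Qt.e) ≫ (εQ ▷ Qt.Q) = ComonObj.counit (X := c.pt.X) ⊗ₘ Qt.e from by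
      rw [← tensorHom_id εQ Qt.Q, tensorHom_comp_tensorHom, hεQ, Category.comp_id]]
    rw [MonoidalCategory.tensorHom_def, ComonObj.counit_comul_assoc]
    rw [show (λ_ c.pt.X).inv ≫ (𝟙_ V ◁ Qt.e) = Qt.e ≫ (λ_ Qt.Q).inv from
      (leftUnitor_inv_naturality _).symm]
  have hQcc2 : ΔQ ≫ (Qt.Q ◁ εQ) = (ρ_ Qt.Q).inv := by
    apply (cancel_epi Qt.e).1
    rw [← Category.assoc, hΔQ', Category.assoc]
    rw [show (Qt.e ⊗ₘ Qt.e) ≫ (Qt.Q ◁ εQ) = Qt.e ⊗ₘ ComonObj.counit (X := c.pt.X) from by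
      rw [← id_tensorHom Qt.Q εQ, tensorHom_comp_tensorHom, hεQ, Category.comp_id]]
    rw [tensorHom_def', ComonObj.comul_counit_assoc]
    rw [show (ρ_ c.pt.X).inv ≫ (Qt.e ▷ 𝟙_ V) = Qt.e ≫ (ρ_ Qt.Q).inv from
      (rightUnitor_inv_naturality _).symm]
  have hQca : ΔQ ≫ (Qt.Q ◁ ΔQ) = ΔQ ≫ (ΔQ ▷ Qt.Q) ≫ (α_ Qt.Q Qt.Q Qt.Q).hom := by
    apply (cancel_epi Qt.e).1
    conv_lhs => rw [← Category.assoc, hΔQ']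
    conv_rhs => rw [← Category.assoc, hΔQ']
    simp only [Category.assoc]
    have hL : (Qt.e ⊗ₘ Qt.e) ≫ (Qt.Q ◁ ΔQ) = Qt.e ⊗ₘ (ComonObj.comul (X := c.pt.X) ≫ (Qt.e ⊗ₘ Qt.e)) := by
      rw [← id_tensorHom Qt.Q ΔQ, tensorHom_comp_tensorHom, Category.comp_id, hΔQ']
    have hR : (Qt.e ⊗ₘ Qt.e) ≫ (ΔQ ▷ Qt.Q) = (ComonObj.comul (X := c.pt.X) ≫ (Qt.e ⊗ₘ Qt.e)) ⊗ₘ Qt.e := by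
      rw [← tensorHom_id ΔQ Qt.Q, tensorHom_comp_tensorHom, Category.comp_id, hΔQ']
    rw [hL, reassoc_of% hR]
    rw [show (Qt.e ⊗ₘ (ComonObj.comul (X := c.pt.X) ≫ (Qt.e ⊗ₘ Qt.e)))
        = (c.pt.X ◁ ComonObj.comul (X := c.pt.X)) ≫ (Qt.e ⊗ₘ (Qt.e ⊗ₘ Qt.e)) from by
      rw [← id_tensorHom c.pt.X (ComonObj.comul (X := c.pt.X)), tensorHom_comp_tensorHom, Category.id_comp]]
    rw [show ((ComonObj.comul (X := c.pt.X) ≫ (Qt.e ⊗ₘ Qt.e)) ⊗ₘ Qt.e)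
        = (ComonObj.comul (X := c.pt.X) ▷ c.pt.X) ≫ ((Qt.e ⊗ₘ Qt.e) ⊗ₘ Qt.e) from by
      rw [← tensorHom_id (ComonObj.comul (X := c.pt.X)) c.pt.X, tensorHom_comp_tensorHom, Category.id_comp]]
    slice_lhs 1 2 => rw [ComonObj.comul_assoc]
    simp only [Category.assoc]
    rw [associator_naturality]
  -- the comonoid and the cone
  set Qc : Comon V :=
    { X := Qt.Q, comon := ⟨εQ, ΔQ,
      hQcc, hQcc2, hQca⟩ } with hQc
  set ccπ : ∀ Z : J, Qc ⟶ F.obj Z := fun Z =>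
    Comon.Hom.mk' (M := Qc) (ψ Z)
      (by
        apply (cancel_epi Qt.e).1
        rw [← Category.assoc, hψ, IsComonHom.hom_counit (c.π.app Z).hom]
        exact hεQ.symm)
      (by
        apply (cancel_epi Qt.e).1
        rw [← Category.assoc, hψ, IsComonHom.hom_comul (c.π.app Z).hom]
        show ComonObj.comul (X := c.pt.X) ≫ ((c.π.app Z).hom ⊗ₘ (c.π.app Z).hom) = Qt.e ≫ ΔQ ≫ (ψ Z ⊗ₘ ψ Z)
        rw [← Category.assoc, hΔQ', Category.assoc, tensorHom_comp_tensorHom, hψ]) with hccπ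
  set ccQ : Limits.Cone F :=
    { pt := Qc
      π := { app := ccπ
             naturality := fun {Z Z'} u => by
               ext
               simp only [Comon.comp_hom', Functor.const_obj_map, Comon.id_hom']
               show 𝟙 Qt.Q ≫ ψ Z' = ψ Z ≫ (F.map u).hom
               rw [Category.id_comp]
               apply (cancel_epi Qt.e).1
               rw [hψ, ← Category.assoc, hψ]
               have hw := congrArg Comon.Hom.hom (c.w u)
               simp only [Comon.comp_hom'] at hw
               exact hw.symm } } with hccQ
  set s := hc.lift ccQ with hs
  have hfac : ∀ Z, s ≫ c.π.app Z = ccπ Z := fun Z => hc.fac ccQ Z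
  set qh : c.pt ⟶ Qc := Comon.Hom.mk' (N := Qc) Qt.e hεQ hΔQ' with hqh
  have hqs : qh ≫ s = 𝟙 c.pt := by
    apply hc.hom_ext
    intro Z
    rw [Category.assoc, hfac Z, Category.id_comp]
    ext
    show Qt.e ≫ (ccπ Z).hom = (c.π.app Z).hom
    exact hψ Z
  have hsplit : Qt.e ≫ s.hom = 𝟙 c.pt.X := by
    have := congrArg Comon.Hom.hom hqs
    simpa using this
  -- conclusion
  intro W g h hgh
  have h1 : ∀ idx, (g ≫ Qt.e) ≫ Qt.f idx = (h ≫ Qt.e) ≫ Qt.f idx := by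
    intro idx
    rw [Category.assoc, Category.assoc, Qt.w]
    exact hgh idx
  have h2 : g ≫ Qt.e = h ≫ Qt.e := hjmQ _ _ h1
  calc g = g ≫ 𝟙 c.pt.X := (Category.comp_id g).symm
    _ = (g ≫ Qt.e) ≫ s.hom := by rw [← hsplit, Category.assoc]
    _ = (h ≫ Qt.e) ≫ s.hom := by rw [h2]
    _ = h ≫ 𝟙 c.pt.X := by rw [← hsplit, Category.assoc]
    _ = h := Category.comp_id h
end

section
/- Let V be a closed symmetric monoidal, locally presentable category with very flat monoidal product, with symmetry σ. For an object W of V, let (T^c(W), Δ, ε) be the cofree comonoid over W with couniversal morphism p : U(T^c(W)) ⟶ W. Then there exists an involutive isomorphism of comonoids T^c(W) ≅ T^c(W)^{cop}: explicitly, there is a morphism t : U(T^c(W)) ⟶ U(T^c(W)) in V satisfying t ∘ t = id, p ∘ t = p, ε ∘ t = ε, and Δ ∘ t = (t ⊗ t) ∘ σ ∘ Δ. -/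
open CategoryTheory Category MonoidalCategory Limits Opposite

universe w v u

/-- The co-opposite comonoid of a comonoid in a braided category. -/
@[simps, reducible]
def Comon.cop {V : Type u} [Category.{v} V] [MonoidalCategory V] [BraidedCategory V]
    (C : Comon V) : Comon V where
  X := C.X
  comon := {
  counit := C.comon.counit
  comul := C.comon.comul ≫ (β_ C.X C.X).hom
  counit_comul := by
    rw [assoc, ← BraidedCategory.braiding_naturality_right, ComonObj.comul_counit_assoc C.X]
    simp
  comul_counit := by
    rw [assoc, ← BraidedCategory.braiding_naturality_left, ComonObj.counit_comul_assoc C.X]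
    simp
  comul_assoc := by
    simp only [comp_whiskerRight, MonoidalCategory.whiskerLeft_comp, assoc]
    rw [← BraidedCategory.braiding_naturality_left_assoc,
      ← BraidedCategory.braiding_naturality_right_assoc,
      ComonObj.comul_assoc_assoc C.X, BraidedCategory.braiding_tensor_left_hom,
      BraidedCategory.braiding_tensor_right_hom]
    simp only [assoc, Iso.hom_inv_id_assoc]
    rw [← BraidedCategory.yang_baxter]
    simp }

/-- for `V` closed symmetric monoidal, locally presentable with very flat
monoidal product, and `T` the cofree comonoid over `W` with couniversal morphism `p`, there is
an involutive isomorphism of comonoids `T ≅ T^{cop}`: a morphism `t : T.X ⟶ T.X` with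
`t ∘ t = id`, `p ∘ t = p`, `ε ∘ t = ε` and `Δ ∘ t = (t ⊗ t) ∘ σ ∘ Δ`. -/
theorem cofree_comonoid_coop_iso
    {V : Type u} [Category.{v} V] [MonoidalCategory V] [SymmetricCategory V]
    [MonoidalClosed V]
    (hV : _root_.IsLocallyPresentable V) (hflat : ∀ A : V, VeryFlat.{v} A)
    (W : V) (T : Comon V) (p : T.X ⟶ W)
    (hT : ∀ (C : Comon V) (γ : C.X ⟶ W), ∃! u : C ⟶ T, u.hom ≫ p = γ) :
    ∃ t : T.X ⟶ T.X,
      t ≫ t = 𝟙 T.X ∧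
      t ≫ p = p ∧
      t ≫ T.comon.counit = T.comon.counit ∧
      t ≫ T.comon.comul = T.comon.comul ≫ (β_ T.X T.X).hom ≫ (t ⊗ₘ t) := by
  obtain ⟨u, hu, -⟩ := hT (Comon.cop T) p
  obtain ⟨v, hv, huniq⟩ := hT T p
  have ht : u.hom ≫ T.comon.comul = T.comon.comul ≫ (β_ T.X T.X).hom ≫ (u.hom ⊗ₘ u.hom) := by
    exact (IsComonHom.hom_comul u.hom).trans (assoc _ _ _)

  have hε : u.hom ≫ T.comon.counit = T.comon.counit := IsComonHom.hom_counit u.hom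
  refine ⟨u.hom, ?_, hu, hε, ht⟩
  have hcomul : (u.hom ≫ u.hom) ≫ T.comon.comul
      = T.comon.comul ≫ ((u.hom ≫ u.hom) ⊗ₘ (u.hom ≫ u.hom)) := by
    rw [assoc, ht, reassoc_of% ht, BraidedCategory.braiding_naturality_assoc,
      SymmetricCategory.symmetry_assoc, tensorHom_comp_tensorHom]
  have hcounit : (u.hom ≫ u.hom) ≫ T.comon.counit = T.comon.counit := by
    rw [assoc, hε, hε]
  have h1 : (Comon.Hom.mk' (u.hom ≫ u.hom) hcounit hcomul : T ⟶ T) = v := by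
    apply huniq
    show (u.hom ≫ u.hom) ≫ p = p
    rw [assoc, hu, hu]
  have h2 : (𝟙 T : T ⟶ T) = v := by
    apply huniq
    simp
  exact congrArg Comon.Hom.hom (h1.trans h2.symm)
end
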